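/- Let T be a diagonalizable automorphism of a finite-dimensional complex vector space V with V^0 ⊆ ker(I - T) where V^0 is a fixed distinguished subspace of dimension d, and let P(x) = charpoly(I - T)(x)/x^d. If V^0 ≠ ker(I - T), then P(I - T) = 0 and P(0) = 0; if V^0 = ker(I - T), then P(I - T)X = P(0)·π_0(X) for all X ∈ V, where π_0 is the projection onto V^0 with respect to the T-invariant decomposition V = V^0 ⊕ V^{≠0}. -/

import Mathlib

open Polynomial

/-- If `S v = 0`, then `aeval S p v = p.eval 0 • v`. -/
lemma aux_aeval_of_ker {V : Type*} [AddCommGroup V] [Module ℂ V]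
    (S : Module.End ℂ V) (p : ℂ[X]) (v : V) (hv : S v = 0) :
    (Polynomial.aeval S p) v = p.eval 0 • v := by
  conv_lhs => rw [← Polynomial.modByMonic_add_div p (X : ℂ[X]),
    Polynomial.modByMonic_X, mul_comm]
  rw [map_add, map_mul, Polynomial.aeval_X, Polynomial.aeval_C]
  simp [Module.End.mul_apply, hv, Module.algebraMap_end_apply]

/-- `aeval` commutes with restriction to an invariant submodule. -/
lemma aux_aeval_restrict {V : Type*} [AddCommGroup V] [Module ℂ V]
    (S : Module.End ℂ V) (W : Submodule ℂ V) (hW : ∀ x ∈ W, S x ∈ W) (p : ℂ[X]) (x : W) :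
    (Polynomial.aeval S p) (x : V) = ((Polynomial.aeval (S.restrict hW) p) x : V) := by
  induction p using Polynomial.induction_on' with
  | add f g hf hg => simp [hf, hg]
  | monomial n a =>
      simp only [Polynomial.aeval_monomial, Module.algebraMap_end_apply,
        LinearMap.smul_apply, Module.End.pow_apply]
      rw [Module.End.pow_restrict (f' := S) n hW]
      simp [LinearMap.restrict_apply]

/-- Let `T` be a diagonalizable automorphism of a finite-dimensional complex
vector space `V` preserving a decomposition `V = V⁰ ⊕ V^{≠0}` and fixing `V⁰` pointwise (so
`V⁰ ⊆ ker (1 - T)`), let `d = dim V⁰` and `P = charpoly (1 - T) / X ^ d`.  If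
`V⁰ ≠ ker (1 - T)`, then `P (1 - T) = 0` and `P 0 = 0`; if `V⁰ = ker (1 - T)`, then
`P (1 - T) X = P 0 • π₀ X` for all `X ∈ V`, where `π₀` is the projection onto `V⁰` along
`V^{≠0}`. -/
theorem stmt_15 {V : Type*} [AddCommGroup V] [Module ℂ V] [FiniteDimensional ℂ V]
    (T : Module.End ℂ V) (hT : IsUnit T)
    (hdiag : ⨆ μ : ℂ, T.eigenspace μ = ⊤)
    (V0 Vne : Submodule ℂ V) (hcompl : IsCompl V0 Vne)
    (π0 : V →ₗ[ℂ] V) (hπ1 : ∀ v ∈ V0, π0 v = v) (hπ2 : ∀ v ∈ Vne, π0 v = 0)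
    (hfix : ∀ v ∈ V0, T v = v) (hpres : ∀ v ∈ Vne, T v ∈ Vne)
    (d : ℕ) (hd : d = Module.finrank ℂ V0)
    (P : Polynomial ℂ) (hP : P = LinearMap.charpoly (1 - T) /ₘ Polynomial.X ^ d) :
    (V0 ≠ LinearMap.ker (1 - T) → Polynomial.aeval (1 - T) P = 0 ∧ P.eval 0 = 0) ∧
      (V0 = LinearMap.ker (1 - T) →
        ∀ X : V, (Polynomial.aeval (1 - T) P) X = P.eval 0 • π0 X) := by
  set S : Module.End ℂ V := 1 - T with hS
  have hker : ∀ v ∈ V0, S v = 0 := by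
    intro v hv
    simp [hS, LinearMap.sub_apply, hfix v hv]
  have hSne : ∀ v ∈ Vne, S v ∈ Vne := fun v hv => Vne.sub_mem hv (hpres v hv)
  set S' : Module.End ℂ Vne := S.restrict hSne with hS'
  set e : (V0 × Vne) ≃ₗ[ℂ] V := Submodule.prodEquivOfIsCompl V0 Vne hcompl with he
  -- the conjugated endomorphism is the product of `0` and `S'`
  have hconj : e.symm.conj S = LinearMap.prodMap (0 : Module.End ℂ V0) S' := by
    apply LinearMap.ext
    rintro ⟨x0, x1⟩
    have h1 : e (x0, x1) = (x0 : V) + (x1 : V) := rfl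
    have h2 : S ((x0 : V) + (x1 : V)) = S (x1 : V) := by
      rw [map_add, hker _ x0.2, zero_add]
    have h3 : e.symm (S (x1 : V)) = (0, S' x1) := by
      have : S (x1 : V) = ((S' x1 : Vne) : V) := by
        simp [hS', LinearMap.restrict_apply]
      rw [this]
      exact Submodule.prodEquivOfIsCompl_symm_apply_right V0 Vne hcompl (S' x1)
    simp only [LinearEquiv.conj_apply, LinearMap.comp_apply, LinearEquiv.coe_coe,
      LinearMap.prodMap_apply, LinearMap.zero_apply, LinearEquiv.symm_symm]
    rw [h1, h2, h3]
  -- charpoly factorization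
  have hchar : S.charpoly = X ^ d * S'.charpoly := by
    have h0 : (0 : Module.End ℂ V0).charpoly = X ^ d := by
      rw [hd]
      exact IsNilpotent.charpoly_eq_X_pow_finrank (⟨1, by simp⟩ : IsNilpotent (0 : Module.End ℂ V0))
    calc S.charpoly = (e.symm.conj S).charpoly := (LinearEquiv.charpoly_conj e.symm S).symm
    _ = (LinearMap.prodMap (0 : Module.End ℂ V0) S').charpoly := by rw [hconj]
    _ = (0 : Module.End ℂ V0).charpoly * S'.charpoly := LinearMap.charpoly_prodMap _ _
    _ = X ^ d * S'.charpoly := by rw [h0]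
  have hPc : P = S'.charpoly := by
    rw [hP, hchar, Polynomial.mul_divByMonic_cancel_left _ (Polynomial.monic_X_pow d)]
  -- Cayley-Hamilton kills the Vne-part
  have hVne0 : ∀ x : Vne, (Polynomial.aeval S P) (x : V) = 0 := by
    intro x
    rw [aux_aeval_restrict S Vne hSne P x, ← hS', hPc, LinearMap.aeval_self_charpoly]
    simp
  have hV00 : ∀ v ∈ V0, (Polynomial.aeval S P) v = P.eval 0 • v := fun v hv =>
    aux_aeval_of_ker S P v (hker v hv)
  -- decomposition of an arbitrary vector
  have hdec : ∀ v : V, ∃ x0 ∈ V0, ∃ x1 ∈ Vne, v = x0 + x1 := by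
    intro v
    have : v ∈ V0 ⊔ Vne := by rw [hcompl.sup_eq_top]; trivial
    obtain ⟨x0, h0, x1, h1, hx⟩ := Submodule.mem_sup.mp this
    exact ⟨x0, h0, x1, h1, hx.symm⟩
  constructor
  · intro hne
    -- there is a nonzero element of Vne in the kernel of S
    have hle : V0 ≤ LinearMap.ker S := fun v hv => LinearMap.mem_ker.mpr (hker v hv)
    obtain ⟨v, hvk, hv0⟩ : ∃ v ∈ LinearMap.ker S, v ∉ V0 := by
      by_contra h
      push_neg at h
      exact hne (le_antisymm hle h)
    obtain ⟨x0, h0, x1, h1, hx⟩ := hdec v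
    have hx1ne : x1 ≠ 0 := by
      rintro rfl
      apply hv0
      rw [hx, add_zero]
      exact h0
    have hSx1 : S x1 = 0 := by
      have : S v = 0 := LinearMap.mem_ker.mp hvk
      rw [hx, map_add, hker _ h0, zero_add] at this
      exact this
    have hP0 : P.eval 0 = 0 := by
      have h := aux_aeval_of_ker S P x1 hSx1
      rw [hVne0 ⟨x1, h1⟩] at h
      rcases smul_eq_zero.mp h.symm with h' | h'
      · exact h'
      · exact absurd h' hx1ne
    refine ⟨?_, hP0⟩
    apply LinearMap.ext
    intro v
    obtain ⟨y0, hy0, y1, hy1, hy⟩ := hdec v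
    rw [hy, map_add, hV00 y0 hy0, hVne0 ⟨y1, hy1⟩, hP0, zero_smul, add_zero,
      LinearMap.zero_apply]
  · intro _ X
    obtain ⟨y0, hy0, y1, hy1, hy⟩ := hdec X
    have hπ : π0 X = y0 := by rw [hy, map_add, hπ1 y0 hy0, hπ2 y1 hy1, add_zero]
    rw [hπ, hy, map_add, hV00 y0 hy0, hVne0 ⟨y1, hy1⟩, add_zero]
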